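/- Let V be a finite-dimensional vector space with 𝕍 = V ⊕ V* = E ⊕ F a splitting into transverse Lagrangian subspaces, with associated projection p (range E, kernel F, p + pᵗ = 1). Define the bivector π ∈ ∧²V by π(α, β) = ⟨α, p(β)⟩ for α, β ∈ V*. Then if {e_i} is a basis of E and {f^i} the dual basis of F (i.e. ⟨e_i, f^j⟩ = δ_i^j), one has π = (1/2) Σ_i pr_V(e_i) ∧ pr_V(f^i), where pr_V: 𝕍 → V is the projection along V*. -/
import Mathlib


set_option synthInstance.maxHeartbeats 1000000
set_option maxHeartbeats 1000000

open ExteriorAlgebra CliffordAlgebra Module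

/-- The pairing bilinear form on `𝕍 = V ⊕ V*`. -/
noncomputable def vPairing (K V : Type*) [Field K] [AddCommGroup V] [Module K V] :
    LinearMap.BilinForm K (V × Module.Dual K V) :=
  LinearMap.mk₂ K (fun w u => w.2 u.1 + u.2 w.1)
    (fun w w' u => by simp; ring)
    (fun c w u => by simp; ring)
    (fun w u u' => by simp; ring)
    (fun c w u => by simp; ring)

/-- let `𝕍 = V ⊕ V* = E ⊕ F` be a Lagrangian splitting with projection `p`
(range `E`, kernel `F`), and let `{e_i}` be a basis of `E` with dual basis `{f^i}` of `F`
(`⟨e_i, f^j⟩ = δ_i^j`). Then the bivector `π ∈ ∧²V` of the splitting, characterized by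
`π^♯(α) = -pr_V(p(α))`, equals `(1/2) Σ_i pr_V(e_i) ∧ pr_V(f^i)`; equivalently, contraction
of the latter sum by any `α ∈ V*` gives `-pr_V(p(α))`. -/
theorem pure_spinors_stmt11 {K V : Type*} [Field K] [CharZero K] [AddCommGroup V] [Module K V]
    [FiniteDimensional K V]
    (E F : Submodule K (V × Module.Dual K V))
    (hElag : E = (vPairing K V).orthogonal E)
    (hFlag : F = (vPairing K V).orthogonal F)
    (hcompl : IsCompl E F)
    (p : (V × Module.Dual K V) →ₗ[K] (V × Module.Dual K V))
    (hpE : ∀ w ∈ E, p w = w) (hpF : ∀ w ∈ F, p w = 0)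
    {n : ℕ} (e f : Fin n → V × Module.Dual K V)
    (heE : ∀ i, e i ∈ E) (hfF : ∀ i, f i ∈ F)
    (heind : LinearIndependent K e) (hespan : Submodule.span K (Set.range e) = E)
    (hfind : LinearIndependent K f) (hfspan : Submodule.span K (Set.range f) = F)
    (hdual : ∀ i j, vPairing K V (e i) (f j) = if i = j then 1 else 0) :
    ∀ α : Module.Dual K V,
      CliffordAlgebra.contractLeft α
          ((2 : K)⁻¹ • ∑ i, ExteriorAlgebra.ι K (e i).1 * ExteriorAlgebra.ι K (f i).1) =
        ExteriorAlgebra.ι K (-(p ((0 : V), α)).1) := by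
  intro α
  have hsymm : ∀ w u : V × Module.Dual K V, vPairing K V w u = vPairing K V u w := by
    intro w u; simp [vPairing]; ring
  -- decompose (0, α) = u + v with u ∈ E, v ∈ F
  have hmem : ((0 : V), α) ∈ E ⊔ F := by
    rw [hcompl.sup_eq_top]; trivial
  obtain ⟨u, hu, v, hv, huv⟩ := Submodule.mem_sup.mp hmem
  -- coefficients
  obtain ⟨c, hc⟩ := (Submodule.mem_span_range_iff_exists_fun K).mp (hespan ▸ hu)
  obtain ⟨d, hd⟩ := (Submodule.mem_span_range_iff_exists_fun K).mp (hfspan ▸ hv)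
  have hdual' : ∀ i j, vPairing K V (f j) (e i) = if i = j then 1 else 0 := by
    intro i j; rw [hsymm]; exact hdual i j
  have hBuF : ∀ j, vPairing K V u (f j) = c j := by
    intro j
    rw [← hc, map_sum, LinearMap.sum_apply]
    simp only [map_smul, LinearMap.smul_apply, hdual, smul_eq_mul, mul_ite, mul_one, mul_zero]
    simp
  have hBvE : ∀ j, vPairing K V v (e j) = d j := by
    intro j
    rw [← hd, map_sum, LinearMap.sum_apply]
    simp only [map_smul, LinearMap.smul_apply, hdual', smul_eq_mul, mul_ite, mul_one, mul_zero]
    simp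
  have hvF0 : ∀ j, vPairing K V v (f j) = 0 := by
    intro j
    rw [hsymm]
    rw [hFlag] at hv
    exact hv _ (hfF j)
  have huE0 : ∀ j, vPairing K V u (e j) = 0 := by
    intro j
    rw [hsymm]
    rw [hElag] at hu
    exact hu _ (heE j)
  have hcj : ∀ j, c j = α ((f j).1) := by
    intro j
    have h3 : vPairing K V ((0 : V), α) (f j) = α (f j).1 := by simp [vPairing]
    have h4 := congrArg (fun w => vPairing K V w (f j)) huv
    simp only [map_add, LinearMap.add_apply, hBuF, hvF0, h3, add_zero] at h4
    exact h4
  have hdj : ∀ j, d j = α ((e j).1) := by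
    intro j
    have h3 : vPairing K V ((0 : V), α) (e j) = α (e j).1 := by simp [vPairing]
    have h4 := congrArg (fun w => vPairing K V w (e j)) huv
    simp only [map_add, LinearMap.add_apply, hBvE, huE0, h3, zero_add] at h4
    exact h4
  have hp : p ((0 : V), α) = u := by
    rw [← huv, map_add, hpE u hu, hpF v hv, add_zero]
  have hu1 : u.1 = ∑ i, α ((f i).1) • (e i).1 := by
    have := congrArg Prod.fst hc
    simp only [Prod.fst_sum, Prod.smul_fst] at this
    rw [← this]
    exact Finset.sum_congr rfl fun i _ => by rw [hcj]
  have hv1 : v.1 = ∑ i, α ((e i).1) • (f i).1 := by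
    have := congrArg Prod.fst hd
    simp only [Prod.fst_sum, Prod.smul_fst] at this
    rw [← this]
    exact Finset.sum_congr rfl fun i _ => by rw [hdj]
  have hsum0 : u.1 + v.1 = 0 := congrArg Prod.fst huv
  have hvneg : v.1 = -u.1 := eq_neg_of_add_eq_zero_right hsum0
  -- compute the contraction
  have hterm : ∀ i, CliffordAlgebra.contractLeft α
      (ExteriorAlgebra.ι K (e i).1 * ExteriorAlgebra.ι K (f i).1)
      = α ((e i).1) • ExteriorAlgebra.ι K (f i).1
        - α ((f i).1) • ExteriorAlgebra.ι K (e i).1 := by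
    intro i
    rw [CliffordAlgebra.contractLeft_ι_mul, CliffordAlgebra.contractLeft_ι]
    congr 1
    rw [← Algebra.commutes, ← Algebra.smul_def]
  have hsum : CliffordAlgebra.contractLeft α
      (∑ i, ExteriorAlgebra.ι K (e i).1 * ExteriorAlgebra.ι K (f i).1)
      = ExteriorAlgebra.ι K (v.1 - u.1) := by
    rw [map_sum]
    simp only [hterm]
    rw [Finset.sum_sub_distrib, map_sub, hu1, hv1, map_sum, map_sum]
    simp only [map_smul]
  rw [map_smul, hsum, hp]
  rw [← map_smul]
  congr 1
  rw [hvneg]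
  have h2 : (2 : K) ≠ 0 := two_ne_zero
  have : -u.1 - u.1 = (2 : K) • (-u.1) := by
    rw [two_smul]; abel
  rw [this, inv_smul_smul₀ h2]
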